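/- If n ≥ 18, then d_2^max(C_n^2) = 3, i.e. every subgraph H of the square C_n^2 with at least 3 vertices satisfies e_H/(v_H − 2) ≤ 3, and this bound is attained by some subgraph. -/

import Mathlib

namespace RandomGraphs

/-- The `k`-th power of a graph: two vertices are adjacent iff their distance in `G`
is positive (they are distinct and reachable from each other) and at most `k`. -/
def graphPow {V : Type*} (G : SimpleGraph V) (k : ℕ) : SimpleGraph V where
  Adj u v := u ≠ v ∧ G.Reachable u v ∧ G.dist u v ≤ k
  symm := by
    refine ⟨fun u v h => ?_⟩
    exact ⟨h.1.symm, h.2.1.symm, by rw [SimpleGraph.dist_comm]; exact h.2.2⟩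
  loopless := by refine ⟨fun v h => ?_⟩; exact h.1 rfl

end RandomGraphs

open RandomGraphs

section TwoDensityAux

open SimpleGraph
open scoped Fin.CommRing Fin.NatCast

variable {n : ℕ}


lemma fin_val_one' [NeZero n] (hn : 18 ≤ n) : ((1 : Fin n) : ℕ) = 1 := by
  rw [Fin.val_one']
  exact Nat.mod_eq_of_lt (by omega)

lemma cyc_adj_cases [NeZero n] (hn : 18 ≤ n) {a c : Fin n}
    (h : (cycleGraph n).Adj a c) : c = a - 1 ∨ c = a + 1 := by
  rw [cycleGraph_adj'] at h
  rcases h with h | h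
  · left
    have h1 : a - c = 1 := Fin.val_injective (by rw [h, fin_val_one' hn])
    calc c = a - (a - c) := by ring
    _ = a - 1 := by rw [h1]
  · right
    have h1 : c - a = 1 := Fin.val_injective (by rw [h, fin_val_one' hn])
    calc c = a + (c - a) := by ring
    _ = a + 1 := by rw [h1]

lemma pow2_adj_cases [NeZero n] (hn : 18 ≤ n) {a b : Fin n}
    (h : (graphPow (cycleGraph n) 2).Adj a b) :
    b = a - 2 ∨ b = a - 1 ∨ b = a + 1 ∨ b = a + 2 := by
  obtain ⟨hne, hr, hd⟩ := h
  obtain ⟨p, hp⟩ := hr.exists_walk_length_eq_dist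
  have hl2 : p.length ≤ 2 := by rw [hp]; exact hd
  have hl0 : p.length ≠ 0 := fun h0 => hne (p.eq_of_length_eq_zero h0)
  have hl : p.length = 1 ∨ p.length = 2 := by omega
  rcases hl with hl | hl
  · have h0 := p.adj_getVert_succ (i := 0) (by omega)
    rw [p.getVert_zero, show 0 + 1 = p.length by omega, p.getVert_length] at h0
    rcases cyc_adj_cases hn h0 with h | h
    · right; left; exact h
    · right; right; left; exact h
  · have h0 := p.adj_getVert_succ (i := 0) (by omega)
    have h1 := p.adj_getVert_succ (i := 1) (by omega)
    rw [p.getVert_zero] at h0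
    rw [show 1 + 1 = p.length by omega, p.getVert_length] at h1
    rcases cyc_adj_cases hn h0 with hc | hc <;> rcases cyc_adj_cases hn h1 with hb | hb
    · left; rw [hb, hc]; ring_nf
    · exfalso; apply hne; rw [hb, hc]; ring
    · exfalso; apply hne; rw [hb, hc]; ring
    · right; right; right; rw [hb, hc]; ring_nf

lemma card_le_four {α : Type*} [DecidableEq α] (a b c d : α) :
    ({a, b, c, d} : Finset α).card ≤ 4 := by
  refine (Finset.card_insert_le _ _).trans (Nat.succ_le_succ ?_)
  refine (Finset.card_insert_le _ _).trans (Nat.succ_le_succ ?_)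
  exact (Finset.card_insert_le _ _).trans (by simp)


lemma upper_bound (hn : 18 ≤ n) (H : (graphPow (cycleGraph n) 2).Subgraph)
    (hv : 3 ≤ H.verts.ncard) : H.edgeSet.ncard ≤ 3 * (H.verts.ncard - 2) := by
  classical
  haveI : NeZero n := ⟨by omega⟩
  haveI : Fintype ↥H.verts := Fintype.ofFinite _
  haveI hdec : DecidableRel H.coe.Adj := Classical.decRel _
  obtain ⟨G', hG'⟩ : ∃ G' : SimpleGraph ↥H.verts, G' = H.coe := ⟨_, rfl⟩
  haveI hdec' : DecidableRel G'.Adj := Classical.decRel _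
  set v := H.verts.ncard with hvdef
  have hcardV : Fintype.card ↥H.verts = v := by
    rw [hvdef, Set.ncard_eq_toFinset_card', Set.toFinset_card]
  have hE : H.edgeSet.ncard = G'.edgeFinset.card := by
    rw [← Subgraph.image_coe_edgeSet_coe,
      Set.ncard_image_of_injective _ (Sym2.map.injective Subtype.coe_injective),
      Set.ncard_eq_toFinset_card']
    congr 1
    ext e
    rw [Set.mem_toFinset, mem_edgeFinset, hG']
  -- degree bounds
  have hdegim : ∀ u : ↥H.verts,
      (G'.neighborFinset u).image Subtype.val ⊆
        {(u : Fin n) - 2, (u : Fin n) - 1, (u : Fin n) + 1, (u : Fin n) + 2} := by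
    intro u x hx
    simp only [Finset.mem_image] at hx
    obtain ⟨w, hw, rfl⟩ := hx
    rw [mem_neighborFinset] at hw
    rw [hG', Subgraph.coe_adj] at hw
    have h2 := pow2_adj_cases hn (H.adj_sub hw)
    simp only [Finset.mem_insert, Finset.mem_singleton]
    tauto
  have hdegeq : ∀ u : ↥H.verts,
      G'.degree u = ((G'.neighborFinset u).image Subtype.val).card := by
    intro u
    rw [Finset.card_image_of_injective _ Subtype.val_injective,
      card_neighborFinset_eq_degree]
  have hdeg4 : ∀ u : ↥H.verts, G'.degree u ≤ 4 := by
    intro u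
    rw [hdegeq u]
    exact (Finset.card_le_card (hdegim u)).trans (card_le_four _ _ _ _)
  have hsum : ∑ u : ↥H.verts, G'.degree u = 2 * G'.edgeFinset.card :=
    sum_degrees_eq_twice_card_edges _
  by_cases h6 : 6 ≤ v
  · have hb : 2 * G'.edgeFinset.card ≤ 4 * v := by
      rw [← hsum]
      calc ∑ u : ↥H.verts, G'.degree u ≤ ∑ _u : ↥H.verts, 4 :=
            Finset.sum_le_sum (fun u _ => hdeg4 u)
        _ = 4 * v := by
            rw [Finset.sum_const, Finset.card_univ, hcardV, smul_eq_mul, mul_comm]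
    omega
  · by_cases h5 : v = 5
    · -- boundary vertex argument
      have hSne : H.verts ≠ Set.univ := by
        intro hU
        have : v = n := by
          rw [hvdef, hU, Set.ncard_univ, Nat.card_eq_fintype_card, Fintype.card_fin]
        omega
      have hbd : ∃ u : Fin n, u ∈ H.verts ∧ u + 1 ∉ H.verts := by
        by_contra hc
        push_neg at hc
        apply hSne
        have hne : H.verts.Nonempty := Set.nonempty_of_ncard_ne_zero (by omega)
        obtain ⟨s0, hs0⟩ := hne
        have hall : ∀ k : ℕ, s0 + (k : Fin n) ∈ H.verts := by
          intro k
          induction k with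
          | zero => simpa using hs0
          | succ k ih =>
            have h' := hc _ ih
            have hcast : ((k + 1 : ℕ) : Fin n) = (k : Fin n) + 1 := by push_cast; ring
            rw [hcast, ← add_assoc]
            exact h'
        ext x
        simp only [Set.mem_univ, iff_true]
        have hx := hall ((x - s0).val)
        have h2 : s0 + (((x - s0).val : ℕ) : Fin n) = x := by
          rw [Fin.cast_val_eq_self]; ring
        rwa [h2] at hx
      obtain ⟨u0, hu0S, hu0⟩ := hbd
      have hdeg3 : G'.degree ⟨u0, hu0S⟩ ≤ 3 := by
        rw [hdegeq ⟨u0, hu0S⟩]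
        have hsub : (G'.neighborFinset ⟨u0, hu0S⟩).image Subtype.val ⊆
            {u0 - 2, u0 - 1, u0 + 2} := by
          intro x hx
          have h1 := hdegim ⟨u0, hu0S⟩ hx
          simp only [Finset.mem_insert, Finset.mem_singleton] at h1 ⊢
          have hxS : x ∈ H.verts := by
            simp only [Finset.mem_image] at hx
            obtain ⟨w, _, rfl⟩ := hx
            exact w.2
          rcases h1 with h | h | h | h
          · tauto
          · tauto
          · exact absurd (h ▸ hxS) hu0
          · tauto
        refine (Finset.card_le_card hsub).trans ?_
        refine (Finset.card_insert_le _ _).trans (Nat.succ_le_succ ?_)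
        exact (Finset.card_insert_le _ _).trans (by simp)
      have hsplit : ∑ u : ↥H.verts, G'.degree u =
          G'.degree ⟨u0, hu0S⟩ +
            ∑ u ∈ Finset.univ.erase ⟨u0, hu0S⟩, G'.degree u :=
        (Finset.add_sum_erase _ _ (Finset.mem_univ _)).symm
      have hrest : ∑ u ∈ Finset.univ.erase (⟨u0, hu0S⟩ : ↥H.verts), G'.degree u ≤
          (v - 1) * 4 := by
        have := Finset.sum_le_card_nsmul (Finset.univ.erase (⟨u0, hu0S⟩ : ↥H.verts))
          (fun u => G'.degree u) 4 (fun x _ => hdeg4 x)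
        rwa [Finset.card_erase_of_mem (Finset.mem_univ _), Finset.card_univ, hcardV,
          smul_eq_mul] at this
      have hb : 2 * G'.edgeFinset.card ≤ 3 + (v - 1) * 4 := by
        calc 2 * G'.edgeFinset.card
            = G'.degree ⟨u0, hu0S⟩ + ∑ u ∈ Finset.univ.erase ⟨u0, hu0S⟩, G'.degree u := by
              rw [← hsum, hsplit]
          _ ≤ 3 + (v - 1) * 4 := add_le_add hdeg3 hrest
      omega
    · -- v = 3 or 4
      have hch := card_edgeFinset_le_card_choose_two (G := G')
      rw [hcardV] at hch
      have h34 : v = 3 ∨ v = 4 := by omega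
      rcases h34 with h | h
      · rw [h] at hch ⊢
        have hc3 : Nat.choose 3 2 = 3 := by decide
        omega
      · rw [h] at hch ⊢
        have hc4 : Nat.choose 4 2 = 6 := by decide
        omega

lemma exists_part (n : ℕ) (hn : 18 ≤ n) :
    ∃ H : (graphPow (SimpleGraph.cycleGraph n) 2).Subgraph, 3 ≤ H.verts.ncard ∧
      (H.edgeSet.ncard : ℝ) / ((H.verts.ncard : ℝ) - 2) = 3 := by
  haveI : NeZero n := ⟨by omega⟩
  set G2 := graphPow (cycleGraph n) 2 with hG2
  have hv0 : ((0 : Fin n) : ℕ) = 0 := rfl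
  have hv1 : ((1 : Fin n) : ℕ) = 1 := by
    rw [show (1 : Fin n) = ((1 : ℕ) : Fin n) by push_cast; ring, Fin.val_natCast]
    exact Nat.mod_eq_of_lt (by omega)
  have hv2 : ((2 : Fin n) : ℕ) = 2 := by
    rw [show (2 : Fin n) = ((2 : ℕ) : Fin n) by push_cast; ring, Fin.val_natCast]
    exact Nat.mod_eq_of_lt (by omega)
  have h01 : (0 : Fin n) ≠ 1 := Fin.ne_of_val_ne (by rw [hv0, hv1]; omega)
  have h02 : (0 : Fin n) ≠ 2 := Fin.ne_of_val_ne (by rw [hv0, hv2]; omega)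
  have h12 : (1 : Fin n) ≠ 2 := Fin.ne_of_val_ne (by rw [hv1, hv2]; omega)
  have ha01 : (cycleGraph n).Adj 0 1 := by
    rw [cycleGraph_adj']
    right
    rw [sub_zero, hv1]
  have ha12 : (cycleGraph n).Adj 1 2 := by
    rw [cycleGraph_adj']
    right
    rw [show (2 : Fin n) - 1 = 1 by ring, hv1]
  have g01 : G2.Adj 0 1 :=
    ⟨h01, ⟨ha01.toWalk⟩, le_trans (dist_le ha01.toWalk) (by simp)⟩
  have g12 : G2.Adj 1 2 :=
    ⟨h12, ⟨ha12.toWalk⟩, le_trans (dist_le ha12.toWalk) (by simp)⟩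
  have g02 : G2.Adj 0 2 :=
    ⟨h02, ⟨Walk.cons ha01 ha12.toWalk⟩,
      le_trans (dist_le (Walk.cons ha01 ha12.toWalk)) (by simp)⟩
  refine ⟨(⊤ : G2.Subgraph).induce {0, 1, 2}, ?_, ?_⟩
  · have : ((⊤ : G2.Subgraph).induce {0, 1, 2}).verts = {0, 1, 2} := rfl
    rw [this, Set.ncard_eq_three.mpr ⟨0, 1, 2, h01, h02, h12, rfl⟩]
  · have hverts : ((⊤ : G2.Subgraph).induce {0, 1, 2}).verts = {0, 1, 2} := rfl
    have hES : ((⊤ : G2.Subgraph).induce {0, 1, 2}).edgeSet =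
        {s((0 : Fin n), 1), s((0 : Fin n), 2), s((1 : Fin n), 2)} := by
      ext e
      induction e using Sym2.ind with
      | _ x y =>
        simp only [Subgraph.mem_edgeSet, Subgraph.induce_adj, Subgraph.top_adj,
          Set.mem_insert_iff, Set.mem_singleton_iff]
        constructor
        · rintro ⟨hx, hy, hadj⟩
          have hne := hadj.ne
          rcases hx with rfl | rfl | rfl <;> rcases hy with rfl | rfl | rfl <;>
            first
              | exact absurd rfl hne
              | simp [Sym2.eq_iff]
        · rintro (h | h | h) <;> rcases Sym2.eq_iff.mp h with ⟨rfl, rfl⟩ | ⟨rfl, rfl⟩ <;>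
            refine ⟨by simp, by simp, ?_⟩ <;>
            first
              | exact g01 | exact g01.symm | exact g02 | exact g02.symm
              | exact g12 | exact g12.symm
    have hne1 : s((0 : Fin n), 1) ≠ s((0 : Fin n), 2) := by
      rw [Ne, Sym2.eq_iff]
      rintro (⟨-, h⟩ | ⟨h, -⟩)
      · exact h12 h
      · exact h02 h
    have hne2 : s((0 : Fin n), 1) ≠ s((1 : Fin n), 2) := by
      rw [Ne, Sym2.eq_iff]
      rintro (⟨h, -⟩ | ⟨h, -⟩)
      · exact h01 h
      · exact h02 h
    have hne3 : s((0 : Fin n), 2) ≠ s((1 : Fin n), 2) := by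
      rw [Ne, Sym2.eq_iff]
      rintro (⟨h, -⟩ | ⟨-, h⟩)
      · exact h01 h
      · exact h12 h.symm
    rw [hverts, hES, Set.ncard_eq_three.mpr ⟨_, _, _, hne1, hne2, hne3, rfl⟩,
      Set.ncard_eq_three.mpr ⟨0, 1, 2, h01, h02, h12, rfl⟩]
    norm_num

end TwoDensityAux

/-- If `n ≥ 18`, then `d₂^max (C_n²) = 3`: every subgraph `H` of the
square `C_n²` with at least 3 vertices satisfies `e_H/(v_H - 2) ≤ 3`, and this bound is
attained by some subgraph. -/
theorem two_density_cycle_square (n : ℕ) (hn : 18 ≤ n) :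
    (∀ H : (graphPow (SimpleGraph.cycleGraph n) 2).Subgraph, 3 ≤ H.verts.ncard →
      (H.edgeSet.ncard : ℝ) / ((H.verts.ncard : ℝ) - 2) ≤ 3) ∧
    (∃ H : (graphPow (SimpleGraph.cycleGraph n) 2).Subgraph, 3 ≤ H.verts.ncard ∧
      (H.edgeSet.ncard : ℝ) / ((H.verts.ncard : ℝ) - 2) = 3) := by
  constructor
  · intro H hv
    have key := upper_bound hn H hv
    have hb : (0 : ℝ) < (H.verts.ncard : ℝ) - 2 := by
      have : (3 : ℝ) ≤ (H.verts.ncard : ℝ) := by exact_mod_cast hv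
      linarith
    rw [div_le_iff₀ hb]
    have h1 : (H.edgeSet.ncard : ℝ) ≤ ((3 * (H.verts.ncard - 2) : ℕ) : ℝ) :=
      Nat.cast_le.mpr key
    have h2 : ((3 * (H.verts.ncard - 2) : ℕ) : ℝ) = 3 * ((H.verts.ncard : ℝ) - 2) := by
      rw [Nat.cast_mul, Nat.cast_sub (by omega)]
      norm_num
    linarith
  · exact exists_part n hn
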